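/- Let n ≥ 1 and a ∈ ℂ with |a| = 1, and suppose Re(a) ≥ 0 if n is even and Re(a) = 0 if n is odd. Consider the set D = {ξ ∈ ℂ : Re(a ξ^n) < 0}. Then D ∩ {ξ : Im ξ < 0} is a union of exactly N disjoint open circular sectors, where N = n/2 if n is even, N = (n−1)/2 if n is odd and a = i, and N = (n+1)/2 if n is odd and a = −i. -/

import Mathlib

open Complex Set

local notation "π" => Real.pi

private lemma cos_neg_exists' {x : ℝ} (h : Real.cos x < 0) :
    ∃ k : ℤ, π/2 + 2*k*π < x ∧ x < 3*π/2 + 2*k*π := by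
  have hπ : (0:ℝ) < π := Real.pi_pos
  have h2π : (0:ℝ) < 2*π := by positivity
  set k : ℤ := ⌊(x - π/2)/(2*π)⌋ with hk
  have h1 : (k:ℝ) ≤ (x - π/2)/(2*π) := Int.floor_le _
  have h2 : (x - π/2)/(2*π) < k + 1 := Int.lt_floor_add_one _
  have h1' : (k:ℝ) * (2*π) ≤ x - π/2 := (le_div_iff₀ h2π).mp h1
  have h2' : x - π/2 < ((k:ℝ) + 1) * (2*π) := (div_lt_iff₀ h2π).mp h2
  have hcy : Real.cos (x - k*(2*π)) = Real.cos x := Real.cos_sub_int_mul_two_pi x k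
  have hy1 : π/2 ≤ x - k*(2*π) := by linarith
  have hylt : x - k*(2*π) < 3*π/2 := by
    by_contra hcon
    push_neg at hcon
    have he : Real.cos (x - k*(2*π) - 2*π) = Real.cos (x - k*(2*π)) := Real.cos_sub_two_pi _
    have hnn : 0 ≤ Real.cos (x - k*(2*π) - 2*π) :=
      Real.cos_nonneg_of_mem_Icc ⟨by linarith, by linarith⟩
    rw [he, hcy] at hnn
    linarith
  have hygt : π/2 < x - k*(2*π) := by
    rcases lt_or_eq_of_le hy1 with h' | h'
    · exact h'
    · exfalso
      rw [← h', Real.cos_pi_div_two] at hcy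
      linarith
  exact ⟨k, by linarith, by linarith⟩

private lemma re_formula' (n : ℕ) (a : ℂ) (ha : ‖a‖ = 1) (ξ : ℂ) :
    (a * ξ ^ n).re = (‖ξ‖)^n * Real.cos (a.arg + n * ξ.arg) := by
  have hmain : a * ξ ^ n
      = ((‖ξ‖ ^ n : ℝ) : ℂ) * Complex.exp (((a.arg + n * ξ.arg : ℝ)) * I) := by
    conv_lhs => rw [← Complex.norm_mul_exp_arg_mul_I a, ← Complex.norm_mul_exp_arg_mul_I ξ]
    rw [ha, Complex.ofReal_one, one_mul, mul_pow, ← Complex.exp_nat_mul]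
    rw [show Complex.exp ((a.arg : ℂ) * I) *
        ((‖ξ‖ : ℂ)^n * Complex.exp ((n : ℂ) * ((ξ.arg : ℂ) * I)))
        = (‖ξ‖ : ℂ)^n *
          (Complex.exp ((a.arg : ℂ) * I) * Complex.exp ((n : ℂ) * ((ξ.arg : ℂ) * I)))
        from by ring]
    rw [← Complex.exp_add]
    push_cast
    ring_nf
  rw [hmain, Complex.re_ofReal_mul, Complex.exp_ofReal_mul_I_re]

set_option maxHeartbeats 1000000 in
private lemma key' (n N : ℕ) (hn : 1 ≤ n) (a : ℂ) (ha : ‖a‖ = 1)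
    (hφ1 : -(π/2) ≤ a.arg) (hφ2 : a.arg ≤ π/2)
    (hub : 2*(N:ℝ)*π ≤ n*π + π/2 - a.arg)
    (hlb : ∀ k : ℤ, a.arg - n*π < 3*π/2 + 2*k*π → -(N:ℤ) ≤ k) :
    ∃ α β : Fin N → ℝ,
      (∀ m, -π ≤ α m ∧ α m < β m ∧ β m ≤ 0) ∧
      (Pairwise fun m m' =>
        Disjoint {ξ : ℂ | ξ ≠ 0 ∧ α m < ξ.arg ∧ ξ.arg < β m}
          {ξ : ℂ | ξ ≠ 0 ∧ α m' < ξ.arg ∧ ξ.arg < β m'}) ∧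
      (∀ m, ({ξ : ℂ | ξ ≠ 0 ∧ α m < ξ.arg ∧ ξ.arg < β m} : Set ℂ).Nonempty) ∧
      (∀ m, IsOpen {ξ : ℂ | ξ ≠ 0 ∧ α m < ξ.arg ∧ ξ.arg < β m}) ∧
      {ξ : ℂ | (a * ξ ^ n).re < 0 ∧ ξ.im < 0} =
        ⋃ m, {ξ : ℂ | ξ ≠ 0 ∧ α m < ξ.arg ∧ ξ.arg < β m} := by
  have hπ : (0:ℝ) < π := Real.pi_pos
  have hn' : (0:ℝ) < n := by exact_mod_cast hn
  set φ := a.arg with hφ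
  set α : Fin N → ℝ := fun m => (π/2 - φ - 2*((m:ℝ)+1)*π)/n with hα
  set β : Fin N → ℝ := fun m => (3*π/2 - φ - 2*((m:ℝ)+1)*π)/n with hβ
  have hbnd : ∀ m : Fin N, -π ≤ α m ∧ α m < β m ∧ β m ≤ 0 := by
    intro m
    have hm1 : (m:ℝ) + 1 ≤ N := by exact_mod_cast m.2
    have hm0 : (0:ℝ) ≤ (m:ℝ) := Nat.cast_nonneg _
    refine ⟨?_, ?_, ?_⟩
    · simp only [hα]
      rw [le_div_iff₀ hn']
      nlinarith
    · simp only [hα, hβ]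
      rw [div_lt_div_iff₀ hn' hn']
      nlinarith
    · simp only [hβ]
      apply div_nonpos_of_nonpos_of_nonneg _ hn'.le
      nlinarith
  refine ⟨α, β, hbnd, ?_, ?_, ?_, ?_⟩
  -- disjointness
  · have hdisj : ∀ m m' : Fin N, (m:ℕ) < (m':ℕ) →
        Disjoint {ξ : ℂ | ξ ≠ 0 ∧ α m < ξ.arg ∧ ξ.arg < β m}
          {ξ : ℂ | ξ ≠ 0 ∧ α m' < ξ.arg ∧ ξ.arg < β m'} := by
      intro m m' hlt
      rw [Set.disjoint_left]
      rintro ξ ⟨-, h1, h2⟩ ⟨-, h1', h2'⟩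
      have hltR : (m:ℝ) + 1 ≤ (m':ℝ) := by exact_mod_cast hlt
      have hba : β m' ≤ α m := by
        simp only [hα, hβ]
        rw [div_le_div_iff₀ hn' hn']
        nlinarith [mul_le_mul_of_nonneg_right
          (mul_le_mul_of_nonneg_right hltR hπ.le) hn'.le]
      linarith
    intro m m' hne
    rcases Nat.lt_or_ge (m:ℕ) (m':ℕ) with h | h
    · exact hdisj m m' h
    · rcases Nat.lt_or_ge (m':ℕ) (m:ℕ) with h' | h'
      · exact (hdisj m' m h').symm
      · exact absurd (Fin.ext (le_antisymm h' h)) hne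
  -- nonempty
  · intro m
    obtain ⟨hb1, hb2, hb3⟩ := hbnd m
    set γ := (α m + β m)/2 with hγ
    have hγ1 : α m < γ := by rw [hγ]; linarith
    have hγ2 : γ < β m := by rw [hγ]; linarith
    have hγIoc : γ ∈ Set.Ioc (-π) π := ⟨by linarith, by linarith⟩
    refine ⟨Complex.cos γ + Complex.sin γ * I, ?_, ?_, ?_⟩
    · intro h0
      have := Complex.norm_cos_add_sin_mul_I γ
      rw [h0] at this
      simp at this
    · rwa [Complex.arg_cos_add_sin_mul_I hγIoc]
    · rwa [Complex.arg_cos_add_sin_mul_I hγIoc]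
  -- open
  · intro m
    obtain ⟨hb1, hb2, hb3⟩ := hbnd m
    have hset : {ξ : ℂ | ξ ≠ 0 ∧ α m < ξ.arg ∧ ξ.arg < β m}
        = Complex.im ⁻¹' Set.Iio 0 ∩ Complex.arg ⁻¹' Set.Ioo (α m) (β m) := by
      ext ξ
      simp only [Set.mem_setOf_eq, Set.mem_inter_iff, Set.mem_preimage, Set.mem_Iio,
        Set.mem_Ioo]
      constructor
      · rintro ⟨h0, h1, h2⟩
        exact ⟨Complex.arg_neg_iff.mp (by linarith), h1, h2⟩
      · rintro ⟨h0, h1, h2⟩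
        refine ⟨?_, h1, h2⟩
        intro h
        rw [h] at h0
        simp at h0
    rw [hset, isOpen_iff_mem_nhds]
    rintro ξ ⟨h0, h1⟩
    refine Filter.inter_mem ?_ ?_
    · exact Complex.continuous_im.continuousAt.preimage_mem_nhds (Iio_mem_nhds h0)
    · exact (Complex.continuousAt_arg (Or.inr (ne_of_lt h0))).preimage_mem_nhds
        (Ioo_mem_nhds h1.1 h1.2)
  -- set equality
  · ext ξ
    simp only [Set.mem_setOf_eq, Set.mem_iUnion]
    constructor
    · rintro ⟨hre, him⟩
      have hξ0 : ξ ≠ 0 := by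
        intro h
        rw [h] at him
        simp at him
      have habs : 0 < ‖ξ‖ := norm_pos_iff.mpr hξ0
      set θ := ξ.arg with hθdef
      have hθ0 : θ < 0 := Complex.arg_neg_iff.mpr him
      have hθπ : -π < θ := Complex.neg_pi_lt_arg ξ
      have hcos : Real.cos (φ + n * θ) < 0 := by
        rw [re_formula' n a ha ξ] at hre
        nlinarith [pow_pos habs n]
      obtain ⟨k, hk1, hk2⟩ := cos_neg_exists' hcos
      have hnθ : (n:ℝ) * θ < 0 := mul_neg_of_pos_of_neg hn' hθ0
      have hk_neg : k ≤ -1 := by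
        have h2 : 2*(k:ℝ)*π < 0 := by linarith
        have h3 : (k:ℝ) < 0 := by nlinarith
        have h4 : k < 0 := by exact_mod_cast h3
        omega
      have hk_ge : -(N:ℤ) ≤ k := by
        apply hlb
        have : -(n:ℝ)*π < (n:ℝ)*θ := by nlinarith
        linarith
      have hjN : (-k-1).toNat < N := by omega
      have hcast : (((-k-1).toNat : ℝ)) = -(k:ℝ) - 1 := by
        rw [show ((-k-1).toNat : ℝ) = (((-k-1).toNat : ℤ) : ℝ) by push_cast; ring]
        rw [Int.toNat_of_nonneg (by omega)]
        push_cast; ring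
      refine ⟨⟨(-k-1).toNat, hjN⟩, hξ0, ?_, ?_⟩
      · simp only [hα, Fin.val_mk]
        rw [hcast, div_lt_iff₀ hn']
        linarith
      · simp only [hβ, Fin.val_mk]
        rw [hcast, lt_div_iff₀ hn']
        linarith
    · rintro ⟨m, hξ0, h1, h2⟩
      obtain ⟨hb1, hb2, hb3⟩ := hbnd m
      have harg : ξ.arg < 0 := by linarith
      have him : ξ.im < 0 := Complex.arg_neg_iff.mp harg
      refine ⟨?_, him⟩
      rw [re_formula' n a ha ξ]
      have habs : 0 < ‖ξ‖ := norm_pos_iff.mpr hξ0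
      have hcos : Real.cos (φ + n * ξ.arg) < 0 := by
        have heq : Real.cos (φ + n * ξ.arg)
            = Real.cos (φ + n * ξ.arg + ((((m:ℕ):ℤ)+1 : ℤ) : ℝ) * (2*π)) :=
          (Real.cos_add_int_mul_two_pi (φ + n * ξ.arg) (((m:ℕ):ℤ)+1)).symm
        rw [heq]
        apply Real.cos_neg_of_pi_div_two_lt_of_lt
        · have h1' := h1
          simp only [hα] at h1'
          rw [div_lt_iff₀ hn'] at h1'
          push_cast
          nlinarith [h1']
        · have h2' := h2
          simp only [hβ] at h2'
          rw [lt_div_iff₀ hn'] at h2'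
          push_cast
          nlinarith [h2']
      exact mul_neg_of_pos_of_neg (pow_pos habs n) hcos

/-- The part of the principal domain `{ξ : Re (a ξ^n) < 0}` lying in the open lower
half plane is a union of exactly `N` disjoint nonempty open circular sectors, where
`N = n/2` if `n` is even, `N = (n-1)/2` if `n` is odd and `a = i`, and
`N = (n+1)/2` if `n` is odd and `a = -i`. -/
theorem stmt0 (n : ℕ) (hn : 1 ≤ n) (a : ℂ) (ha : ‖a‖ = 1)
    (heven : Even n → 0 ≤ a.re) (hodd : ¬ Even n → a.re = 0) :
    ∃ α β : Fin (if Even n then n / 2 else if a = Complex.I then (n - 1) / 2 else (n + 1) / 2) → ℝ,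
      (∀ m, -Real.pi ≤ α m ∧ α m < β m ∧ β m ≤ 0) ∧
      (Pairwise fun m m' =>
        Disjoint {ξ : ℂ | ξ ≠ 0 ∧ α m < ξ.arg ∧ ξ.arg < β m}
          {ξ : ℂ | ξ ≠ 0 ∧ α m' < ξ.arg ∧ ξ.arg < β m'}) ∧
      (∀ m, ({ξ : ℂ | ξ ≠ 0 ∧ α m < ξ.arg ∧ ξ.arg < β m} : Set ℂ).Nonempty) ∧
      (∀ m, IsOpen {ξ : ℂ | ξ ≠ 0 ∧ α m < ξ.arg ∧ ξ.arg < β m}) ∧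
      {ξ : ℂ | (a * ξ ^ n).re < 0 ∧ ξ.im < 0} =
        ⋃ m, {ξ : ℂ | ξ ≠ 0 ∧ α m < ξ.arg ∧ ξ.arg < β m} := by
  have hπ : (0:ℝ) < π := Real.pi_pos
  by_cases hE : Even n
  · rw [if_pos hE]
    have hre := heven hE
    have habs2 : |a.arg| ≤ π/2 := Complex.abs_arg_le_pi_div_two_iff.mpr hre
    obtain ⟨c, hc⟩ := hE
    have hcR : ((n:ℝ)) = (c:ℝ) + (c:ℝ) := by exact_mod_cast hc
    have hdiv : n / 2 = c := by omega
    apply key' n (n/2) hn a ha (abs_le.mp habs2).1 (abs_le.mp habs2).2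
    · rw [hdiv]
      have h := (abs_le.mp habs2).2
      have hnπ : (n:ℝ)*π = 2*(c:ℝ)*π := by rw [hcR]; ring
      linarith
    · intro k hk
      have hφ1 := (abs_le.mp habs2).1
      have h1 : (0:ℝ) < (2 + (n:ℝ) + 2*(k:ℝ)) * π := by nlinarith
      have h2 : (0:ℝ) < 2 + (n:ℝ) + 2*(k:ℝ) := by
        by_contra hcon
        push_neg at hcon
        nlinarith
      have h3 : (0:ℤ) < 2 + (n:ℤ) + 2*k := by exact_mod_cast h2
      have h4 : n = c + c := hc
      omega
  · have hre0 := hodd hE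
    have hnormSq : a.re * a.re + a.im * a.im = 1 := by
      have := Complex.sq_norm a
      rw [ha, Complex.normSq_apply] at this
      linarith [this]
    have him : a.im = 1 ∨ a.im = -1 := by
      have h : (a.im - 1) * (a.im + 1) = 0 := by nlinarith
      rcases mul_eq_zero.mp h with h | h
      · left; linarith
      · right; linarith
    obtain ⟨c, hc⟩ := Nat.not_even_iff_odd.mp hE
    by_cases haI : a = Complex.I
    · rw [if_neg hE, if_pos haI]
      subst haI
      have hdiv : (n - 1) / 2 = c := by omega
      apply key' n ((n-1)/2) hn Complex.I ha
        (by rw [Complex.arg_I]; linarith) (le_of_eq Complex.arg_I)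
      · rw [hdiv, Complex.arg_I]
        have hcR : ((n:ℝ)) = 2*(c:ℝ) + 1 := by exact_mod_cast hc
        have hnπ : (n:ℝ)*π = 2*(c:ℝ)*π + π := by rw [hcR]; ring
        linarith
      · intro k hk
        rw [Complex.arg_I] at hk
        have h1 : (0:ℝ) < (1 + (n:ℝ) + 2*(k:ℝ)) * π := by nlinarith
        have h2 : (0:ℝ) < 1 + (n:ℝ) + 2*(k:ℝ) := by
          by_contra hcon
          push_neg at hcon
          nlinarith
        have h3 : (0:ℤ) < 1 + (n:ℤ) + 2*k := by exact_mod_cast h2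
        have h4 : n = 2*c + 1 := hc
        omega
    · rw [if_neg hE, if_neg haI]
      have haNI : a = -Complex.I := by
        rcases him with h | h
        · exact absurd (Complex.ext (by simp [hre0]) (by simp [h])) haI
        · exact Complex.ext (by simp [hre0]) (by simp [h])
      subst haNI
      have hdiv : (n + 1) / 2 = c + 1 := by omega
      apply key' n ((n+1)/2) hn (-Complex.I) ha
        (le_of_eq Complex.arg_neg_I.symm) (by rw [Complex.arg_neg_I]; linarith)
      · rw [hdiv, Complex.arg_neg_I]
        have hcR : ((n:ℝ)) = 2*(c:ℝ) + 1 := by exact_mod_cast hc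
        have hnπ : (n:ℝ)*π = 2*(c:ℝ)*π + π := by rw [hcR]; ring
        push_cast
        linarith
      · intro k hk
        rw [Complex.arg_neg_I] at hk
        have h1 : (0:ℝ) < (2 + (n:ℝ) + 2*(k:ℝ)) * π := by nlinarith
        have h2 : (0:ℝ) < 2 + (n:ℝ) + 2*(k:ℝ) := by
          by_contra hcon
          push_neg at hcon
          nlinarith
        have h3 : (0:ℤ) < 2 + (n:ℤ) + 2*k := by exact_mod_cast h2
        have h4 : n = 2*c + 1 := hc
        omega
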